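/- For n ≥ k ≥ 0, the coefficient of x^n in x^k·C(x)^{k+1}/sqrt(1-4x) equals binom(2n-k+1, n-k). -/

import Mathlib

open PowerSeries

/-- The Catalan generating function C(x) = Σ_{n≥0} C_n x^n. -/
noncomputable def catalanGF : PowerSeries ℚ := PowerSeries.mk fun n => (catalan n : ℚ)

/-- The series 1/sqrt(1-4x) = Σ_{n≥0} binom(2n,n) x^n. -/
noncomputable def invSqrtGF : PowerSeries ℚ := PowerSeries.mk fun n => ((2 * n).choose n : ℚ)

lemma catalanGF_eq : catalanGF = 1 + X * catalanGF ^ 2 := by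
  ext n
  cases n with
  | zero => simp [catalanGF]
  | succ m =>
    rw [map_add, coeff_succ_X_mul]
    simp only [catalanGF, coeff_mk, coeff_one, Nat.succ_ne_zero, if_false, zero_add]
    rw [pow_two, coeff_mul]
    rw [catalan_succ']
    push_cast
    simp [coeff_mk]

lemma key (m : ℕ) : ∀ j, PowerSeries.coeff (R := ℚ) m (catalanGF ^ j * invSqrtGF)
    = ((2 * m + j).choose m : ℚ) := by
  induction m using Nat.strong_induction_on with
  | _ m ih =>
    intro j
    match m with
    | 0 =>
      have : PowerSeries.coeff (R := ℚ) 0 (catalanGF ^ j * invSqrtGF)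
          = constantCoeff (R := ℚ) (catalanGF ^ j * invSqrtGF) := by
        simp [PowerSeries.coeff_zero_eq_constantCoeff]
      rw [this, map_mul, map_pow]
      simp [catalanGF, invSqrtGF, constantCoeff_mk]
    | m + 1 =>
      induction j with
      | zero => simp [invSqrtGF, coeff_mk]
      | succ j ihj =>
        have expand : catalanGF ^ (j+1) * invSqrtGF
            = catalanGF ^ j * invSqrtGF + X * (catalanGF ^ (j+2) * invSqrtGF) := by
          have h0 : catalanGF * (catalanGF ^ j * invSqrtGF)
              = (1 + X * catalanGF ^ 2) * (catalanGF ^ j * invSqrtGF) := by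
            nth_rewrite 1 [catalanGF_eq]; rfl
          rw [pow_succ', mul_assoc, h0]; ring
        rw [expand, map_add, coeff_succ_X_mul, ihj, ih m (Nat.lt_succ_self m) (j+2)]
        have : (2 * (m+1) + (j+1)).choose (m+1)
            = (2 * (m+1) + j).choose (m+1) + (2 * m + (j+2)).choose m := by
          have h1 : 2 * (m+1) + (j+1) = (2*(m+1)+j) + 1 := by ring
          have h2 : 2 * m + (j + 2) = 2*(m+1)+j := by ring
          rw [h1, h2, Nat.choose_succ_succ, Nat.add_comm]
        rw [← Nat.cast_add, ← this]

/-- For n ≥ k ≥ 0, the coefficient of x^n in x^k·C(x)^{k+1}/sqrt(1-4x)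
equals binom(2n-k+1, n-k). -/
theorem coeff_E_gf (n k : ℕ) (h : k ≤ n) :
    PowerSeries.coeff (R := ℚ) n ((X : PowerSeries ℚ) ^ k * catalanGF ^ (k + 1) * invSqrtGF)
      = ((2 * n - k + 1).choose (n - k) : ℚ) := by
  rw [mul_assoc, ← Nat.sub_add_cancel h, coeff_X_pow_mul, key]
  congr 2 <;> omega
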